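/- Let f be convex, differentiable, L-smooth with minimizer x⋆. Define Simple-OGM: y_{k+1} = xₖ − (1/L)∇f(xₖ), x_{k+1} = y_{k+1} + (k/(k+3))(y_{k+1} − yₖ) + ((k+2)/(k+3))(y_{k+1} − xₖ), with x₀ = y₀. Then f(yₖ) − f(x⋆) ≤ L‖x₀ − x⋆‖²/(k+1)² for all k ≥ 1. -/

import Mathlib

set_option maxHeartbeats 1000000

open RealInnerProductSpace Set

section Aux

variable {E : Type*} [NormedAddCommGroup E] [InnerProductSpace ℝ E] [CompleteSpace E]

lemma ogm_line_hasDerivAt {f : E → ℝ} {f' : E → E} (hdiff : ∀ x, HasGradientAt f (f' x) x)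
    (a d : E) (s : ℝ) :
    HasDerivAt (fun t : ℝ => f (a + t • d)) ⟪f' (a + s • d), d⟫ s := by
  have hpath : HasDerivAt (fun t : ℝ => a + t • d) d s := by
    simpa using ((hasDerivAt_id s).smul_const d).const_add a
  have hf : HasFDerivAt f (InnerProductSpace.toDual ℝ E (f' (a + s • d))) (a + s • d) :=
    (hdiff (a + s • d)).hasFDerivAt
  simpa [Function.comp_def] using hf.comp_hasDerivAt s hpath

lemma ogm_convex_lower {f : E → ℝ} {f' : E → E} (hdiff : ∀ x, HasGradientAt f (f' x) x)
    (hconv : ConvexOn ℝ Set.univ f) (a b : E) :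
    f a + ⟪f' a, b - a⟫ ≤ f b := by
  rcases eq_or_ne a b with rfl | hne
  · simp
  · set g : ℝ → ℝ := fun t => f (a + t • (b - a)) with hg
    have hgc : ConvexOn ℝ Set.univ g := by
      have h1 : ConvexOn ℝ ((AffineMap.lineMap a b : ℝ →ᵃ[ℝ] E) ⁻¹' univ)
          (f ∘ (AffineMap.lineMap a b : ℝ →ᵃ[ℝ] E)) := hconv.comp_affineMap _
      have : g = f ∘ (AffineMap.lineMap a b : ℝ →ᵃ[ℝ] E) := by
        funext t
        simp [hg, AffineMap.lineMap_apply, add_comm]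
      rw [this]
      simpa using h1
    have hd : HasDerivAt g ⟪f' a, b - a⟫ 0 := by
      simpa using ogm_line_hasDerivAt hdiff a (b - a) 0
    have := hgc.le_slope_of_hasDerivAt (mem_univ 0) (mem_univ 1) one_pos hd
    rw [slope_def_field] at this
    have hg0 : g 0 = f a := by simp [hg]
    have hg1 : g 1 = f b := by simp [hg]
    rw [hg0, hg1] at this
    simp at this
    linarith

lemma ogm_descent {f : E → ℝ} {f' : E → E} {L : ℝ} (hL : 0 < L)
    (hdiff : ∀ x, HasGradientAt f (f' x) x)
    (hsmooth : ∀ x y, ‖f' x - f' y‖ ≤ L * ‖x - y‖) (a b : E) :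
    f b ≤ f a + ⟪f' a, b - a⟫ + L / 2 * ‖b - a‖ ^ 2 := by
  set d := b - a with hd
  set ψ : ℝ → ℝ := fun s => f (a + s • d) - s * ⟪f' a, d⟫ - L * s ^ 2 / 2 * ‖d‖ ^ 2 with hψ
  have hψd : ∀ s : ℝ, HasDerivAt ψ (⟪f' (a + s • d), d⟫ - ⟪f' a, d⟫ - L * s * ‖d‖ ^ 2) s := by
    intro s
    have h1 := ogm_line_hasDerivAt hdiff a d s
    have h2 : HasDerivAt (fun s : ℝ => s * ⟪f' a, d⟫) ⟪f' a, d⟫ s := by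
      simpa using (hasDerivAt_id s).mul_const ⟪f' a, d⟫
    have h3 : HasDerivAt (fun s : ℝ => L * s ^ 2 / 2 * ‖d‖ ^ 2) (L * s * ‖d‖ ^ 2) s := by
      have : HasDerivAt (fun s : ℝ => s ^ 2) (2 * s) s := by
        simpa using hasDerivAt_pow 2 s
      have := ((this.const_mul L).div_const 2).mul_const (‖d‖ ^ 2)
      exact this.congr_deriv (by ring)
    exact (h1.sub h2).sub h3
  have hmono : AntitoneOn ψ (Icc (0:ℝ) 1) := by
    apply antitoneOn_of_deriv_nonpos (convex_Icc 0 1)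
    · exact Continuous.continuousOn
        ((fun s => (hψd s).continuousAt) |> continuous_iff_continuousAt.mpr)
    · intro s hs
      exact (hψd s).differentiableAt.differentiableWithinAt
    · intro s hs
      rw [interior_Icc] at hs
      rw [(hψd s).deriv]
      have h1 : ⟪f' (a + s • d) - f' a, d⟫ ≤ ‖f' (a + s • d) - f' a‖ * ‖d‖ :=
        real_inner_le_norm _ _
      have h2 : ‖f' (a + s • d) - f' a‖ ≤ L * (s * ‖d‖) := by
        have := hsmooth (a + s • d) a
        simpa [norm_smul, abs_of_pos hs.1] using this
      have h3 : ⟪f' (a + s • d), d⟫ - ⟪f' a, d⟫ = ⟪f' (a + s • d) - f' a, d⟫ := by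
        rw [inner_sub_left]
      nlinarith [norm_nonneg d, norm_nonneg (f' (a + s • d) - f' a), hs.1.le]
  have h01 := hmono (left_mem_Icc.mpr zero_le_one) (right_mem_Icc.mpr zero_le_one) zero_le_one
  have hψ0 : ψ 0 = f a := by simp [hψ]
  have hψ1 : ψ 1 = f b - ⟪f' a, d⟫ - L / 2 * ‖d‖ ^ 2 := by
    simp [hψ]
    simp [hd]
  rw [hψ0, hψ1] at h01
  linarith

lemma ogm_coco {f : E → ℝ} {f' : E → E} {L : ℝ} (hL : 0 < L)
    (hdiff : ∀ x, HasGradientAt f (f' x) x)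
    (hconv : ConvexOn ℝ Set.univ f)
    (hsmooth : ∀ x y, ‖f' x - f' y‖ ≤ L * ‖x - y‖) (a b : E) :
    f b + ⟪f' b, a - b⟫ + 1 / (2 * L) * ‖f' a - f' b‖ ^ 2 ≤ f a := by
  set Δ := f' a - f' b with hΔ
  set w := a - (1/L) • Δ with hw
  have d1 := ogm_descent hL hdiff hsmooth a w
  have d2 := ogm_convex_lower hdiff hconv b w
  have e1 : ⟪f' a, w - a⟫ = -(1/L) * ⟪f' a, Δ⟫ := by
    simp [hw, real_inner_smul_right]
  have e2 : ‖w - a‖ ^ 2 = (1/L)^2 * ‖Δ‖ ^ 2 := by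
    have : w - a = -((1/L) • Δ) := by simp [hw]
    rw [this, norm_neg, norm_smul]
    rw [mul_pow, Real.norm_eq_abs, sq_abs]
  have e3 : ⟪f' b, w - b⟫ = ⟪f' b, a - b⟫ - (1/L) * ⟪f' b, Δ⟫ := by
    have : w - b = (a - b) - (1/L) • Δ := by simp [hw]; abel
    rw [this, inner_sub_right, real_inner_smul_right]
  have e4 : ⟪f' a, Δ⟫ - ⟪f' b, Δ⟫ = ‖Δ‖ ^ 2 := by
    rw [← inner_sub_left, ← hΔ, real_inner_self_eq_norm_sq]
  rw [e1, e2] at d1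
  rw [e3] at d2
  have hL' : L ≠ 0 := ne_of_gt hL
  have key : L / 2 * ((1/L)^2 * ‖Δ‖ ^ 2) = 1/(2*L) * ‖Δ‖^2 := by
    field_simp
  rw [key] at d1
  have e5 : -(1/L)*⟪f' a, Δ⟫ + (1/L)*⟪f' b, Δ⟫ + (1/L)*‖Δ‖^2 = 0 := by
    rw [← e4]; ring
  have e6 : (1/L)*‖Δ‖^2 - 1/(2*L)*‖Δ‖^2 = 1/(2*L)*‖Δ‖^2 := by
    field_simp
    ring
  linarith [d1, d2, e5, e6]

/-- One-step potential inequality for Simple-OGM. -/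
lemma ogm_step_vec (t h : ℝ) (ht : 1 ≤ t) (hh : 0 < h)
    (X Z u v X2 : E) (F1 F2 : ℝ)
    (hX2 : X2 = (1 - 1/t) • (X - h • u) + (1/t) • Z)
    (hQ12 : F2 + ⟪v, X - X2⟫ + h/2 * ‖u - v‖^2 ≤ F1)
    (hQ02 : F2 + h/2 * ‖v‖^2 ≤ ⟪v, X2⟫)
    (hQ10 : h/2 * ‖u‖^2 ≤ F1) :
    4*t^2*h*(F2 - h/2 * ‖v‖^2) + ‖Z - (2*t*h) • v‖^2
      ≤ (4*t^2 - 4*t + 1)*h*(F1 - h/2 * ‖u‖^2) + ‖Z‖^2 := by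
  have ht0 : (t:ℝ) ≠ 0 := by linarith
  have e1 : ⟪v, X - X2⟫ = (1/t)*⟪v,X⟫ + (1 - 1/t)*h*⟪v,u⟫ - (1/t)*⟪v,Z⟫ := by
    rw [hX2]
    simp [inner_sub_right, inner_add_right, real_inner_smul_right]
    ring
  have e2 : ⟪v, X2⟫ = (1 - 1/t)*⟪v,X⟫ - (1 - 1/t)*h*⟪v,u⟫ + (1/t)*⟪v,Z⟫ := by
    rw [hX2]
    simp [inner_sub_right, inner_add_right, real_inner_smul_right]
    ring
  have e3 : ‖u - v‖^2 = ‖u‖^2 - 2*⟪v,u⟫ + ‖v‖^2 := by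
    rw [norm_sub_sq_real, real_inner_comm]
  have e4 : ‖Z - (2*t*h) • v‖^2 = ‖Z‖^2 - 2*(2*t*h)*⟪v,Z⟫ + (2*t*h)^2*‖v‖^2 := by
    rw [norm_sub_sq_real, real_inner_smul_right, norm_smul]
    rw [real_inner_comm]
    simp [mul_pow, sq_abs]
    ring
  rw [e1] at hQ12
  rw [e2] at hQ02
  rw [e3] at hQ12
  rw [e4]
  have c12 : 0 ≤ 4*t*(t-1)*h :=
    mul_nonneg (mul_nonneg (by linarith) (by linarith)) hh.le
  have c02 : 0 ≤ 4*t*h := mul_nonneg (by linarith) hh.le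
  have q12 : 0 ≤ F1 - F2 - ((1/t)*⟪v,X⟫ + (1 - 1/t)*h*⟪v,u⟫ - (1/t)*⟪v,Z⟫)
      - h/2*(‖u‖^2 - 2*⟪v,u⟫ + ‖v‖^2) := by linarith
  have q02 : 0 ≤ ((1 - 1/t)*⟪v,X⟫ - (1 - 1/t)*h*⟪v,u⟫ + (1/t)*⟪v,Z⟫) - F2 - h/2*‖v‖^2 := by
    linarith
  have q10 : 0 ≤ F1 - h/2*‖u‖^2 := by linarith
  have key : (4*t^2 - 4*t + 1)*h*(F1 - h/2 * ‖u‖^2) + ‖Z‖^2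
      - (4*t^2*h*(F2 - h/2 * ‖v‖^2) + (‖Z‖^2 - 2*(2*t*h)*⟪v,Z⟫ + (2*t*h)^2*‖v‖^2))
      = 4*t*(t-1)*h * (F1 - F2 - ((1/t)*⟪v,X⟫ + (1 - 1/t)*h*⟪v,u⟫ - (1/t)*⟪v,Z⟫)
          - h/2*(‖u‖^2 - 2*⟪v,u⟫ + ‖v‖^2))
        + 4*t*h * (((1 - 1/t)*⟪v,X⟫ - (1 - 1/t)*h*⟪v,u⟫ + (1/t)*⟪v,Z⟫) - F2 - h/2*‖v‖^2)
        + h * (F1 - h/2*‖u‖^2) := by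
    field_simp
    ring
  linarith [mul_nonneg c12 q12, mul_nonneg c02 q02, mul_nonneg hh.le q10, key]

end Aux

/-- Convergence rate of Simple-OGM:
`f(yₖ) − f⋆ ≤ L‖x₀ − x⋆‖² / (k+1)²` for `k ≥ 1`. -/
theorem simple_ogm_rate (n : ℕ)
    (f : EuclideanSpace ℝ (Fin n) → ℝ)
    (f' : EuclideanSpace ℝ (Fin n) → EuclideanSpace ℝ (Fin n))
    (L : ℝ) (hL : 0 < L)
    (hdiff : ∀ x, HasGradientAt f (f' x) x)
    (hconv : ConvexOn ℝ Set.univ f)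
    (hsmooth : ∀ x y, ‖f' x - f' y‖ ≤ L * ‖x - y‖)
    (xstar : EuclideanSpace ℝ (Fin n)) (hmin : ∀ y, f xstar ≤ f y)
    (x y : ℕ → EuclideanSpace ℝ (Fin n))
    (hx0 : x 0 = y 0)
    (hy : ∀ k, y (k + 1) = x k - (1 / L) • f' (x k))
    (hx : ∀ k : ℕ, x (k + 1) = y (k + 1) + ((k : ℝ) / ((k : ℝ) + 3)) • (y (k + 1) - y k)
      + (((k : ℝ) + 2) / ((k : ℝ) + 3)) • (y (k + 1) - x k)) :
    ∀ k : ℕ, 1 ≤ k → f (y k) - f xstar ≤ L * ‖x 0 - xstar‖ ^ 2 / ((k : ℝ) + 1) ^ 2 := by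
  have hL' : L ≠ 0 := ne_of_gt hL
  -- gradient vanishes at the minimizer
  have hstar : f' xstar = 0 := by
    have hloc : IsLocalMin f xstar := Filter.Eventually.of_forall hmin
    have := hloc.hasFDerivAt_eq_zero (hdiff xstar).hasFDerivAt
    have h2 : InnerProductSpace.toDual ℝ _ (f' xstar) = InnerProductSpace.toDual ℝ _ 0 := by
      simpa using this
    exact (InnerProductSpace.toDual ℝ _).injective h2
  have coco := ogm_coco hL hdiff hconv hsmooth
  -- the z-sequence
  set z : ℕ → EuclideanSpace ℝ (Fin n) :=
    fun k => (((k:ℝ)+2)/2) • x k - ((k:ℝ)/2) • y k with hz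
  have z0 : z 0 = x 0 := by simp [hz]
  have zrec : ∀ k : ℕ, z (k+1) = z k - (((k:ℝ)+2)/L) • f' (x k) := by
    intro k
    have hk3 : (k:ℝ) + 3 ≠ 0 := by positivity
    simp only [hz]
    rw [hx k, hy k]
    push_cast
    match_scalars <;> field_simp <;> ring
  have xrep : ∀ k : ℕ, x (k+1) - xstar
      = (1 - 1/(((k:ℝ)+3)/2)) • ((x k - xstar) - (1/L) • f' (x k))
        + (1/(((k:ℝ)+3)/2)) • (z (k+1) - xstar) := by
    intro k
    have hk3 : (k:ℝ) + 3 ≠ 0 := by positivity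
    simp only [hz]
    rw [hx k, hy k]
    push_cast
    match_scalars <;> field_simp <;> ring
  -- the potential
  set δ : ℕ → ℝ := fun k => f (x k) - f xstar - 1/(2*L) * ‖f' (x k)‖^2 with hδ
  set Ek : ℕ → ℝ := fun k => ((k:ℝ)+2)^2/L * δ k + ‖z (k+1) - xstar‖^2 with hE
  -- δ k is an upper bound for f (y (k+1)) - f xstar, and is bounded below via hmin
  have hdesc : ∀ k : ℕ, f (y (k+1)) - f xstar ≤ δ k := by
    intro k
    have := ogm_descent hL hdiff hsmooth (x k) (y (k+1))
    rw [hy k] at this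
    have e1 : x k - (1/L) • f' (x k) - x k = -((1/L) • f' (x k)) := by abel
    rw [e1] at this
    have e2 : ⟪f' (x k), -((1/L) • f' (x k))⟫ = -(1/L) * ‖f' (x k)‖^2 := by
      rw [inner_neg_right, real_inner_smul_right, real_inner_self_eq_norm_sq]
      ring
    have e3 : ‖-((1/L) • f' (x k))‖^2 = (1/L)^2 * ‖f' (x k)‖^2 := by
      rw [norm_neg, norm_smul]
      rw [mul_pow, Real.norm_eq_abs, sq_abs]
    rw [e2, e3] at this
    have e4 : L/2 * ((1/L)^2 * ‖f' (x k)‖^2) = 1/(2*L) * ‖f' (x k)‖^2 := by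
      field_simp
    rw [e4] at this
    have e6 : (1/L)*‖f' (x k)‖^2 - 1/(2*L)*‖f' (x k)‖^2 = 1/(2*L)*‖f' (x k)‖^2 := by
      field_simp
      ring
    simp only [hδ]
    rw [hy k]
    linarith [this, e6]
  have hQ10 : ∀ k : ℕ, 1/(2*L) * ‖f' (x k)‖^2 ≤ f (x k) - f xstar := by
    intro k
    have h1 := hdesc k
    have h2 := hmin (y (k+1))
    simp only [hδ] at h1
    linarith
  -- initial potential bound
  have E0 : Ek 0 ≤ ‖x 0 - xstar‖^2 := by
    have hc := coco xstar (x 0)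
    rw [hstar] at hc
    have e0 : ⟪f' (x 0), xstar - x 0⟫ = -⟪f' (x 0), x 0 - xstar⟫ := by
      rw [← inner_neg_right]; congr 1; abel
    rw [e0] at hc
    simp only [zero_sub, norm_neg] at hc
    -- z 1 - xstar = (x 0 - xstar) - (2/L) • f' (x 0)
    have hz1 : z 1 - xstar = (x 0 - xstar) - (2/L) • f' (x 0) := by
      have := zrec 0
      rw [z0] at this
      rw [this]
      push_cast
      match_scalars <;> field_simp <;> ring
    have hnorm : ‖z 1 - xstar‖^2 = ‖x 0 - xstar‖^2 - 2*(2/L)*⟪f' (x 0), x 0 - xstar⟫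
        + (2/L)^2 * ‖f' (x 0)‖^2 := by
      rw [hz1, norm_sub_sq_real, real_inner_smul_right, norm_smul, mul_pow,
        Real.norm_eq_abs, sq_abs, real_inner_comm (x 0 - xstar) (f' (x 0))]
      ring
    simp only [hE, hδ]
    push_cast
    rw [hnorm]
    have hcc : f (x 0) - f xstar - ⟪f' (x 0), x 0 - xstar⟫ + 1/(2*L) * ‖f' (x 0)‖^2 ≤ 0 := by
      linarith
    have hfactor : ((0:ℝ)+2)^2/L * (f (x 0) - f xstar - 1/(2*L) * ‖f' (x 0)‖^2)
        + (‖x 0 - xstar‖^2 - 2*(2/L)*⟪f' (x 0), x 0 - xstar⟫ + (2/L)^2 * ‖f' (x 0)‖^2)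
        - ‖x 0 - xstar‖^2
        = 4/L * (f (x 0) - f xstar - ⟪f' (x 0), x 0 - xstar⟫ + 1/(2*L) * ‖f' (x 0)‖^2) := by
      field_simp
      ring
    nlinarith [mul_nonneg (by positivity : (0:ℝ) ≤ 4/L)
      (by linarith : (0:ℝ) ≤ -(f (x 0) - f xstar - ⟪f' (x 0), x 0 - xstar⟫
        + 1/(2*L) * ‖f' (x 0)‖^2))]
  -- one-step decrease
  have Estep : ∀ k : ℕ, Ek (k+1) ≤ Ek k := by
    intro k
    set t : ℝ := ((k:ℝ)+3)/2 with htdef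
    have ht : 1 ≤ t := by simp only [htdef]; nlinarith [Nat.cast_nonneg (α := ℝ) k]
    have hh : 0 < 1/L := by positivity
    have hstep := ogm_step_vec (E := EuclideanSpace ℝ (Fin n)) t (1/L) ht hh
      (x k - xstar) (z (k+1) - xstar) (f' (x k)) (f' (x (k+1))) (x (k+1) - xstar)
      (f (x k) - f xstar) (f (x (k+1)) - f xstar)
      (xrep k)
      (by -- Q12
        have hc := coco (x k) (x (k+1))
        have e : x k - xstar - (x (k+1) - xstar) = x k - x (k+1) := by abel
        rw [e]
        have e2 : (1/L)/2 = 1/(2*L) := by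
          field_simp
        rw [e2]
        linarith)
      (by -- Q02
        have hc := coco xstar (x (k+1))
        rw [hstar] at hc
        have e0 : ⟪f' (x (k+1)), xstar - x (k+1)⟫ = -⟪f' (x (k+1)), x (k+1) - xstar⟫ := by
          rw [← inner_neg_right]; congr 1; abel
        rw [e0] at hc
        simp only [zero_sub, norm_neg] at hc
        have e2 : (1/L)/2 = 1/(2*L) := by
          field_simp
        rw [e2]
        linarith)
      (by -- Q10
        have := hQ10 k
        have e2 : (1/L)/2 = 1/(2*L) := by
          field_simp
        rw [e2]
        linarith)
    -- now rewrite hstep into Ek form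
    have hzz : z (k+1) - xstar - (2*t*(1/L)) • f' (x (k+1)) = z (k+1+1) - xstar := by
      rw [zrec (k+1)]
      push_cast
      have : 2*t*(1/L) = ((k:ℝ)+1+2)/L := by simp only [htdef]; field_simp; ring
      rw [this]
      abel
    rw [hzz] at hstep
    have e2 : (1/L)/2 = 1/(2*L) := by
          field_simp
    rw [e2] at hstep
    have ha : 4*t^2*(1/L) = (((k:ℝ)+1)+2)^2/L := by
      simp only [htdef]; field_simp; ring
    have hb : (4*t^2 - 4*t + 1)*(1/L) = ((k:ℝ)+2)^2/L := by
      simp only [htdef]; field_simp; ring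
    rw [ha, hb] at hstep
    simp only [hE, hδ]
    push_cast
    push_cast at hstep
    linarith
  have Emono : ∀ k : ℕ, Ek k ≤ ‖x 0 - xstar‖^2 := by
    intro k
    induction k with
    | zero => exact E0
    | succ m ih => exact le_trans (Estep m) ih
  -- conclusion
  intro k hk
  obtain ⟨m, rfl⟩ : ∃ m, k = m + 1 := ⟨k - 1, by omega⟩
  have h1 := hdesc m
  have h2 := Emono m
  have h3 : ((m:ℝ)+2)^2/L * δ m ≤ Ek m := by
    simp only [hE]
    nlinarith [sq_nonneg ‖z (m+1) - xstar‖]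
  have hpos : (0:ℝ) < ((m:ℝ)+2)^2/L := by positivity
  have h5 : ((m:ℝ)+2)^2/L * δ m ≤ ‖x 0 - xstar‖^2 := le_trans h3 h2
  have h4 : δ m ≤ L * ‖x 0 - xstar‖^2 / ((m:ℝ)+2)^2 := by
    rw [le_div_iff₀ (by positivity : (0:ℝ) < ((m:ℝ)+2)^2)]
    calc δ m * ((m:ℝ)+2)^2 = (((m:ℝ)+2)^2/L * δ m) * L := by field_simp
    _ ≤ ‖x 0 - xstar‖^2 * L := mul_le_mul_of_nonneg_right h5 hL.le
    _ = L * ‖x 0 - xstar‖^2 := mul_comm _ _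
  have hcast : ((m:ℝ)+1+1) = (m:ℝ)+2 := by ring
  push_cast
  rw [hcast]
  exact le_trans h1 h4
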